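/- Let V be a real number, T a point of ℝ², and p : ℝ → ℝ², ψ : ℝ → ℝ differentiable at t with p'(t) = V·(cos ψ(t), sin ψ(t)), ψ'(t) = ω, and p(t) ≠ T on a neighborhood of t. Define the unit heading u(s) = (cos ψ(s), sin ψ(s)), the unit reference direction e(s) = (T − p(s))/‖T − p(s)‖, the bearing cosine c(s) = ⟨u(s), e(s)⟩, and the bearing sine s̃(s) = e₁(s)·u₂(s) − e₂(s)·u₁(s). Then c is differentiable at t with c'(t) = −s̃(t)·(ω + V·s̃(t)/‖p(t) − T‖). (This is the coordinate form of the bearing-angle dynamics θ_b' = ω + V·sin θ_b / r.) -/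

import Mathlib

open Real RealInnerProductSpace

noncomputable def vec2 (a b : ℝ) : EuclideanSpace ℝ (Fin 2) :=
  (EuclideanSpace.equiv (Fin 2) ℝ).symm ![a, b]

theorem bearing_cosine_dynamics
    (V ω : ℝ) (T : EuclideanSpace ℝ (Fin 2))
    (p : ℝ → EuclideanSpace ℝ (Fin 2)) (ψ : ℝ → ℝ) (t : ℝ)
    (u e : ℝ → EuclideanSpace ℝ (Fin 2)) (c sb : ℝ → ℝ)
    (hu : ∀ s, u s = vec2 (Real.cos (ψ s)) (Real.sin (ψ s)))
    (he : ∀ s, e s = ‖T - p s‖⁻¹ • (T - p s))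
    (hc : ∀ s, c s = ⟪u s, e s⟫)
    (hsb : ∀ s, sb s = e s 0 * u s 1 - e s 1 * u s 0)
    (hp : HasDerivAt p (V • u t) t)
    (hψ : HasDerivAt ψ ω t)
    (hne : ∀ᶠ s in nhds t, p s ≠ T) :
    HasDerivAt c (-(sb t) * (ω + V * sb t / ‖p t - T‖)) t := by
  -- coordinate helpers
  have hvec0 : ∀ a b : ℝ, vec2 a b 0 = a := by intro a b; simp [vec2]
  have hvec1 : ∀ a b : ℝ, vec2 a b 1 = b := by intro a b; simp [vec2]
  set a : ℝ → ℝ := fun s => T 0 - p s 0 with ha_def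
  set b : ℝ → ℝ := fun s => T 1 - p s 1 with hb_def
  have hnorm : ∀ s, ‖T - p s‖ = Real.sqrt (a s ^ 2 + b s ^ 2) := by
    intro s
    simp [EuclideanSpace.norm_eq, Fin.sum_univ_two, sq_abs, a, b]
  -- nonvanishing at t
  have hpt : p t ≠ T := hne.self_of_nhds
  have hq : a t ^ 2 + b t ^ 2 ≠ 0 := by
    intro h
    apply hpt
    have h0 : a t = 0 ∧ b t = 0 := by
      constructor <;> nlinarith [sq_nonneg (a t), sq_nonneg (b t)]
    ext i
    fin_cases i <;> simp [a, b] at h0 ⊢ <;> linarith [h0.1, h0.2]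
  have hqpos : 0 < a t ^ 2 + b t ^ 2 := lt_of_le_of_ne (by positivity) (Ne.symm hq)
  have hrpos : 0 < Real.sqrt (a t ^ 2 + b t ^ 2) := Real.sqrt_pos.2 hqpos
  -- c as explicit function
  have hcf : c = fun s => (Real.cos (ψ s) * a s + Real.sin (ψ s) * b s) /
      Real.sqrt (a s ^ 2 + b s ^ 2) := by
    funext s
    rw [hc, hu, he]
    simp [PiLp.inner_apply, Fin.sum_univ_two, hvec0, hvec1, PiLp.smul_apply,
      PiLp.sub_apply, hnorm, smul_eq_mul, a, b]
    field_simp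
  -- coordinate derivatives of p
  have hp0 : HasDerivAt (fun s => p s 0) (V * Real.cos (ψ t)) t := by
    have := (EuclideanSpace.proj (0 : Fin 2)).hasFDerivAt.comp_hasDerivAt t hp
    simp [hu, hvec0] at this ⊢; exact this
  have hp1 : HasDerivAt (fun s => p s 1) (V * Real.sin (ψ t)) t := by
    have := (EuclideanSpace.proj (1 : Fin 2)).hasFDerivAt.comp_hasDerivAt t hp
    simp [hu, hvec1] at this ⊢; exact this
  have hda : HasDerivAt a (-(V * Real.cos (ψ t))) t := by
    have := (hasDerivAt_const t (T 0)).sub hp0; simp at this; exact this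
  have hdb : HasDerivAt b (-(V * Real.sin (ψ t))) t := by
    have := (hasDerivAt_const t (T 1)).sub hp1; simp at this; exact this
  -- derivative of numerator
  have hN : HasDerivAt (fun s => Real.cos (ψ s) * a s + Real.sin (ψ s) * b s)
      ((-Real.sin (ψ t) * ω) * a t + Real.cos (ψ t) * (-(V * Real.cos (ψ t))) +
       ((Real.cos (ψ t) * ω) * b t + Real.sin (ψ t) * (-(V * Real.sin (ψ t))))) t :=
    ((hψ.cos.mul hda).add (hψ.sin.mul hdb))
  -- derivative of denominator
  have hQ : HasDerivAt (fun s => a s ^ 2 + b s ^ 2)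
      (2 * a t * (-(V * Real.cos (ψ t))) + 2 * b t * (-(V * Real.sin (ψ t)))) t := by
    have h1 := hda.pow 2
    have h2 := hdb.pow 2
    have := h1.add h2; simp [mul_comm, mul_assoc, mul_left_comm] at this ⊢; exact this
  have hD : HasDerivAt (fun s => Real.sqrt (a s ^ 2 + b s ^ 2))
      ((2 * a t * (-(V * Real.cos (ψ t))) + 2 * b t * (-(V * Real.sin (ψ t)))) /
        (2 * Real.sqrt (a t ^ 2 + b t ^ 2))) t := hQ.sqrt hq
  have hder := hN.div hD (ne_of_gt hrpos)
  rw [hcf]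
  convert hder using 1
  case e'_4 => rfl
  case e'_5 => rfl
  case e'_8 => rfl
  -- now algebra
  have hsbt : sb t = (a t * Real.sin (ψ t) - b t * Real.cos (ψ t)) /
      Real.sqrt (a t ^ 2 + b t ^ 2) := by
    rw [hsb, hu, he]
    simp [hvec0, hvec1, PiLp.smul_apply, PiLp.sub_apply, hnorm, smul_eq_mul, a, b]
    field_simp
  have hnormpt : ‖p t - T‖ = Real.sqrt (a t ^ 2 + b t ^ 2) := by
    rw [← norm_sub_rev, hnorm]
  rw [hsbt, hnormpt]
  set r := Real.sqrt (a t ^ 2 + b t ^ 2) with hr_def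
  have hr2 : r ^ 2 = a t ^ 2 + b t ^ 2 := Real.sq_sqrt (le_of_lt hqpos)
  have hrne : r ≠ 0 := ne_of_gt hrpos
  have hpyth : Real.cos (ψ t) ^ 2 + Real.sin (ψ t) ^ 2 = 1 := by
    rw [add_comm]; exact Real.sin_sq_add_cos_sq (ψ t)
  have hr2' : r ^ 2 = (T 0 - p t 0) ^ 2 + (T 1 - p t 1) ^ 2 := hr2
  field_simp
  linear_combination (V * (Real.cos (ψ t) ^ 2 + Real.sin (ψ t) ^ 2)) * hr2'
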